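/- Let X' be a nonnegative integrable random variable, let X be a random variable with values in [0,1] that is independent of X', and let Y be a {0,1}-valued random variable independent of X' with Pr[Y = 1] = E[X]. Then E[ min{1, X' + X} ] ≥ E[ min{1, X' + Y} ]. -/

import Mathlib

open MeasureTheory ProbabilityTheory

lemma stmt6_key (a t : ℝ) (ha : 0 ≤ a) (ht0 : 0 ≤ t) (ht1 : t ≤ 1) :
    min 1 a + t * (1 - min 1 a) ≤ min 1 (a + t) := by
  rcases le_total 1 a with h | h
  · rw [min_eq_left h, min_eq_left (by linarith)]; ring_nf; simp
  · rw [min_eq_right h]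
    rcases le_total 1 (a + t) with h2 | h2
    · rw [min_eq_left h2]; nlinarith
    · rw [min_eq_right h2]; nlinarith

lemma stmt6_eq (a y : ℝ) (ha : 0 ≤ a) (hy : y = 0 ∨ y = 1) :
    min 1 (a + y) = min 1 a + y * (1 - min 1 a) := by
  rcases hy with rfl | rfl
  · simp
  · rw [min_eq_left (by linarith)]; ring

/-- Replacing a [0,1]-valued summand X, independent of the nonnegative X',
by a Bernoulli variable Y, independent of X', with Pr[Y = 1] = E[X], can only decrease
E[min{1, X' + ·}]. -/
theorem stmt_6 {Ω : Type*} [MeasureSpace Ω] [IsProbabilityMeasure (ℙ : Measure Ω)]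
    (X' X Y : Ω → ℝ)
    (hX'meas : Measurable X') (hXmeas : Measurable X) (hYmeas : Measurable Y)
    (hX'nonneg : ∀ᵐ ω, 0 ≤ X' ω) (hX'int : Integrable X')
    (hXmem : ∀ᵐ ω, X ω ∈ Set.Icc (0:ℝ) 1)
    (hYval : ∀ᵐ ω, Y ω = 0 ∨ Y ω = 1)
    (hindepX : IndepFun X' X ℙ)
    (hindepY : IndepFun X' Y ℙ)
    (hYmean : (ℙ {ω | Y ω = 1}).toReal = ∫ ω, X ω) :
    ∫ ω, min 1 (X' ω + X ω) ≥ ∫ ω, min 1 (X' ω + Y ω) := by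
  have hfmeas : Measurable (fun a : ℝ => min 1 a) := measurable_const.min measurable_id
  set F : Ω → ℝ := fun ω => min 1 (X' ω) with hF
  have hFmeas : Measurable F := hfmeas.comp hX'meas
  have hFbd : ∀ᵐ ω, |F ω| ≤ 1 := by
    filter_upwards [hX'nonneg] with ω hω
    rw [abs_le]
    constructor
    · exact le_min (by norm_num) (by linarith)
    · exact min_le_left _ _
  have hFint : Integrable F :=
    (integrable_const (1:ℝ)).mono' hFmeas.aestronglyMeasurable hFbd
  -- integrability of the bounded quantities
  have bddInt : ∀ (g : Ω → ℝ), Measurable g → (∀ᵐ ω, |g ω| ≤ 1) → Integrable g :=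
    fun g hg hb => (integrable_const (1:ℝ)).mono' hg.aestronglyMeasurable hb
  have hXbd : ∀ᵐ ω, |X ω| ≤ 1 := by
    filter_upwards [hXmem] with ω hω; rw [abs_le]; exact ⟨by linarith [hω.1], hω.2⟩
  have hYbd : ∀ᵐ ω, |Y ω| ≤ 1 := by
    filter_upwards [hYval] with ω hω; rcases hω with h | h <;> rw [h] <;> norm_num
  have hXint : Integrable X := bddInt X hXmeas hXbd
  have hYint : Integrable Y := bddInt Y hYmeas hYbd
  have hGmeas : Measurable (fun ω => 1 - F ω) := measurable_const.sub hFmeas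
  have hGbd : ∀ᵐ ω, |1 - F ω| ≤ 1 := by
    filter_upwards [hX'nonneg] with ω hω
    rw [abs_le]
    constructor
    · simp only [hF]; have := min_le_left (1:ℝ) (X' ω); linarith
    · simp only [hF]; have : (0:ℝ) ≤ min 1 (X' ω) := le_min (by norm_num) hω; linarith
  have hGint : Integrable (fun ω => 1 - F ω) := bddInt _ hGmeas hGbd
  have hXGbd : ∀ᵐ ω, |X ω * (1 - F ω)| ≤ 1 := by
    filter_upwards [hXbd, hGbd] with ω h1 h2
    rw [abs_mul]
    calc |X ω| * |1 - F ω| ≤ 1 * 1 := mul_le_mul h1 h2 (abs_nonneg _) (by norm_num)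
    _ = 1 := by norm_num
  have hXGint : Integrable (fun ω => X ω * (1 - F ω)) :=
    bddInt _ (hXmeas.mul hGmeas) hXGbd
  have hYGbd : ∀ᵐ ω, |Y ω * (1 - F ω)| ≤ 1 := by
    filter_upwards [hYbd, hGbd] with ω h1 h2
    rw [abs_mul]
    calc |Y ω| * |1 - F ω| ≤ 1 * 1 := mul_le_mul h1 h2 (abs_nonneg _) (by norm_num)
    _ = 1 := by norm_num
  have hYGint : Integrable (fun ω => Y ω * (1 - F ω)) :=
    bddInt _ (hYmeas.mul hGmeas) hYGbd
  -- independence products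
  have hindepGX : IndepFun X (fun ω => 1 - F ω) ℙ :=
    (hindepX.comp (measurable_const.sub hfmeas) measurable_id).symm
  have hindepGY : IndepFun Y (fun ω => 1 - F ω) ℙ :=
    (hindepY.comp (measurable_const.sub hfmeas) measurable_id).symm
  have hprodX : ∫ ω, X ω * (1 - F ω) = (∫ ω, X ω) * ∫ ω, (1 - F ω) :=
    hindepGX.integral_fun_mul_eq_mul_integral hXmeas.aestronglyMeasurable hGmeas.aestronglyMeasurable
  have hprodY : ∫ ω, Y ω * (1 - F ω) = (∫ ω, Y ω) * ∫ ω, (1 - F ω) :=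
    hindepGY.integral_fun_mul_eq_mul_integral hYmeas.aestronglyMeasurable hGmeas.aestronglyMeasurable
  -- E[Y] = E[X]
  have hEY : ∫ ω, Y ω = ∫ ω, X ω := by
    rw [← hYmean]
    have hs : MeasurableSet {ω | Y ω = 1} := hYmeas (measurableSet_singleton 1)
    have : Y =ᵐ[ℙ] Set.indicator {ω | Y ω = 1} (fun _ => (1:ℝ)) := by
      filter_upwards [hYval] with ω hω
      rcases hω with h | h <;>
        simp [Set.indicator_apply, Set.mem_setOf_eq, h]
    rw [integral_congr_ae this, integral_indicator_const _ hs]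
    simp [measureReal_def]
  -- RHS equality
  have hRHS : ∫ ω, min 1 (X' ω + Y ω) = (∫ ω, F ω) + ∫ ω, Y ω * (1 - F ω) := by
    rw [← integral_add hFint hYGint]
    refine integral_congr_ae ?_
    filter_upwards [hX'nonneg, hYval] with ω h1 h2
    exact stmt6_eq (X' ω) (Y ω) h1 h2
  -- LHS inequality
  have hLHS : (∫ ω, F ω) + (∫ ω, X ω * (1 - F ω)) ≤ ∫ ω, min 1 (X' ω + X ω) := by
    have hMint : Integrable (fun ω => min 1 (X' ω + X ω)) := by
      refine bddInt _ (hfmeas.comp (hX'meas.add hXmeas)) ?_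
      filter_upwards [hX'nonneg, hXmem] with ω h1 h2
      rw [abs_le]
      exact ⟨le_min (by norm_num) (by linarith [h2.1]), min_le_left _ _⟩
    rw [← integral_add hFint hXGint]
    refine integral_mono_ae (hFint.add hXGint) hMint ?_
    filter_upwards [hX'nonneg, hXmem] with ω h1 h2
    exact stmt6_key (X' ω) (X ω) h1 h2.1 h2.2
  rw [ge_iff_le, hRHS, hprodY, hEY, ← hprodX]
  exact hLHS
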